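/- Let g : ℤ^d → ℝ₊ satisfy g(x) ≤ C/(1+‖x‖^{d−2}) for d ≥ 5, and define G = g * g (discrete convolution). Then there is C' with G(x) ≤ C'/(1+‖x‖^{d−4}) for all x ∈ ℤ^d, and if additionally g(x) ≥ c/(1+‖x‖^{d−2}) then G(x) ≥ c'/(1+‖x‖^{d−4}). -/

import Mathlib

/-- Euclidean norm of a point of `ℤ^d`. -/
noncomputable def znorm {d : ℕ} (x : Fin d → ℤ) : ℝ :=
  Real.sqrt (∑ i, ((x i : ℝ)) ^ 2)

open Finset



/-- sup norm as a natural number -/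
def mnorm {d : ℕ} (z : Fin d → ℤ) : ℕ := Finset.univ.sup fun i => (z i).natAbs

noncomputable def zbox (d n : ℕ) : Finset (Fin d → ℤ) := Fintype.piFinset fun _ => Finset.Icc (-(n:ℤ)) n

lemma mem_zbox {d n : ℕ} {y : Fin d → ℤ} : y ∈ zbox d n ↔ mnorm y ≤ n := by
  simp only [zbox, Fintype.mem_piFinset, Finset.mem_Icc, mnorm, Finset.sup_le_iff,
    Finset.mem_univ, true_imp_iff]
  constructor
  · intro h i; have := h i; omega
  · intro h i; have := h i; omega

lemma card_zbox (d n : ℕ) : (zbox d n).card = (2*n+1)^d := by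
  simp only [zbox, Fintype.card_piFinset, Int.card_Icc]
  have : ((n:ℤ) + 1 - -(n:ℤ)).toNat = 2*n+1 := by omega
  rw [this, Finset.prod_const, Finset.card_univ, Fintype.card_fin]

lemma znorm_nonneg {d : ℕ} (x : Fin d → ℤ) : 0 ≤ znorm x := Real.sqrt_nonneg _

lemma mnorm_le_znorm {d : ℕ} (hd : 1 ≤ d) (z : Fin d → ℤ) : (mnorm z : ℝ) ≤ znorm z := by
  have : Nonempty (Fin d) := ⟨⟨0, hd⟩⟩
  obtain ⟨i, -, hi⟩ := Finset.exists_mem_eq_sup Finset.univ univ_nonempty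
    (fun i => (z i).natAbs)
  rw [mnorm, hi]
  have h1 : ((z i).natAbs : ℝ) = |((z i : ℝ))| := by
    rw [Nat.cast_natAbs]; push_cast; ring_nf
  rw [h1, ← Real.sqrt_sq_eq_abs]
  apply Real.sqrt_le_sqrt
  exact Finset.single_le_sum (f := fun j => ((z j : ℝ))^2) (fun j _ => sq_nonneg _) (mem_univ i)

lemma znorm_le_mnorm {d : ℕ} (z : Fin d → ℤ) : znorm z ≤ d * mnorm z := by
  have h0 : (0:ℝ) ≤ d * mnorm z := by positivity
  rw [znorm, show (d:ℝ) * mnorm z = Real.sqrt ((d * mnorm z)^2) by rw [Real.sqrt_sq h0]]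
  apply Real.sqrt_le_sqrt
  have : ∀ i, ((z i : ℝ))^2 ≤ (mnorm z : ℝ)^2 := by
    intro i
    have h1 : (z i).natAbs ≤ mnorm z := Finset.le_sup (f := fun i => (z i).natAbs) (mem_univ i)
    have h2 : |((z i : ℝ))| ≤ (mnorm z : ℝ) := by
      rw [show |((z i:ℝ))| = ((z i).natAbs : ℝ) by rw [Nat.cast_natAbs]; push_cast; ring_nf]
      exact_mod_cast h1
    calc ((z i:ℝ))^2 = |((z i:ℝ))|^2 := (sq_abs _).symm
      _ ≤ _ := by apply pow_le_pow_left₀ (abs_nonneg _) h2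
  calc ∑ i, ((z i:ℝ))^2 ≤ ∑ _i : Fin d, (mnorm z:ℝ)^2 := Finset.sum_le_sum fun i _ => this i
    _ = d * (mnorm z:ℝ)^2 := by rw [Finset.sum_const, Finset.card_univ, Fintype.card_fin, nsmul_eq_mul]
    _ ≤ (d * mnorm z)^2 := by
        have hdd : (d:ℝ) ≤ (d:ℝ)^2 := by exact_mod_cast Nat.le_self_pow (by norm_num) d
        nlinarith [sq_nonneg ((mnorm z : ℝ)), Nat.cast_nonneg (α := ℝ) d]

lemma znorm_triangle {d : ℕ} (x y : Fin d → ℤ) : znorm x ≤ znorm y + znorm (x - y) := by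
  let v : (Fin d → ℤ) → EuclideanSpace ℝ (Fin d) := fun z => WithLp.toLp 2 (fun i => (z i : ℝ))
  have hv : ∀ z, znorm z = ‖v z‖ := by
    intro z
    rw [EuclideanSpace.norm_eq, znorm]
    congr 1
    apply Finset.sum_congr rfl
    intro i _
    rw [Real.norm_eq_abs, sq_abs]
  have hsub : v (x - y) = v x - v y := by
    ext i
    show ((x i - y i : ℤ) : ℝ) = (x i : ℝ) - (y i : ℝ)
    push_cast
    ring
  rw [hv, hv, hv, hsub]
  exact norm_le_norm_add_norm_sub' _ _

lemma znorm_neg {d : ℕ} (x : Fin d → ℤ) : znorm (-x) = znorm x := by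
  unfold znorm
  congr 1
  apply Finset.sum_congr rfl
  intro i _
  have h : (((-x) i : ℤ) : ℝ) = -((x i : ℝ)) := by
    show ((-(x i) : ℤ) : ℝ) = _
    push_cast
    ring
  rw [h, neg_sq]

section aux
-- real pow difference
lemma pow_sub_pow_le' {a b : ℝ} (hb : 0 ≤ b) (hab : b ≤ a) (k : ℕ) :
    a^k - b^k ≤ k * a^(k-1) * (a - b) := by
  induction k with
  | zero => simp
  | succ k ih =>
    rcases Nat.eq_zero_or_pos k with hk | hk
    · subst hk; simp
    have ha : 0 ≤ a := hb.trans hab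
    have h1 : a^(k+1) - b^(k+1) = a * (a^k - b^k) + (a-b) * b^k := by ring
    have h2 : a * (a^k - b^k) ≤ a * (k * a^(k-1) * (a-b)) :=
      mul_le_mul_of_nonneg_left ih ha
    have h3 : a * ((k:ℝ) * a^(k-1) * (a-b)) = k * a^k * (a-b) := by
      rw [show a * ((k:ℝ) * a^(k-1) * (a-b)) = (k:ℝ) * (a * a^(k-1)) * (a-b) by ring,
        ← pow_succ']
      congr 3
      omega
    have h4 : (a-b) * b^k ≤ (a-b) * a^k :=
      mul_le_mul_of_nonneg_left (pow_le_pow_left₀ hb hab k) (by linarith)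
    have : a^(k+1) - b^(k+1) ≤ (k:ℝ) * a^k * (a-b) + (a-b) * a^k := by
      rw [h1]; rw [h3] at h2; linarith
    calc a^(k+1) - b^(k+1) ≤ (k:ℝ) * a^k * (a-b) + (a-b) * a^k := this
      _ = (k+1 : ℕ) * a^((k+1)-1) * (a-b) := by push_cast; ring_nf
  
-- telescoping
lemma inv_sq_Icc_le (n₁ : ℕ) (h1 : 1 ≤ n₁) : ∀ n : ℕ,
    ∑ m ∈ Icc n₁ n, (1 / (m:ℝ)^2) ≤ 2 / (n₁:ℝ) - 2 / ((max n₁ (n+1) : ℕ):ℝ) := by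
  intro n
  induction n with
  | zero =>
    rw [Finset.Icc_eq_empty (by omega)]
    have h0 : max n₁ 1 = n₁ := by omega
    rw [sum_empty, h0, sub_self]
  | succ n ih =>
    rcases Nat.lt_or_ge (n+1) n₁ with h | h
    · rw [Finset.Icc_eq_empty (by omega), sum_empty]
      have hle : (2:ℝ)/((max n₁ (n+1+1) : ℕ):ℝ) ≤ 2/(n₁:ℝ) := by
        apply div_le_div_of_nonneg_left (by norm_num) (by positivity)
        exact_mod_cast Nat.le_max_left n₁ (n+1+1)
      linarith
    · rw [Finset.sum_Icc_succ_top (by omega)]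
      have hm1 : ((max n₁ (n+1) : ℕ) : ℝ) ≤ ((n:ℝ)+1) := by
        have : (max n₁ (n+1):ℕ) ≤ n+1 := by omega
        calc ((max n₁ (n+1):ℕ):ℝ) ≤ ((n+1:ℕ):ℝ) := by exact_mod_cast this
          _ = (n:ℝ)+1 := by push_cast; ring
      have hm1' : (0:ℝ) < ((max n₁ (n+1):ℕ):ℝ) := by positivity
      have key : (1:ℝ)/((n:ℝ)+1)^2 ≤ 2/((n:ℝ)+1) - 2/((n:ℝ)+2) := by
        rw [div_sub_div _ _ (by positivity) (by positivity)]
        rw [div_le_div_iff₀ (by positivity) (by positivity)]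
        nlinarith [sq_nonneg ((n:ℝ)+1)]
      have h2 : (2:ℝ)/((n:ℝ)+1) ≤ 2/((max n₁ (n+1):ℕ):ℝ) :=
        div_le_div_of_nonneg_left (by norm_num) hm1' hm1
      have hmax2 : ((max n₁ (n+1+1):ℕ):ℝ) = (n:ℝ)+2 := by
        have h3 : max n₁ (n+1+1) = n+2 := by omega
        rw [h3]; push_cast; ring
      rw [hmax2]
      have hcast : ((n+1:ℕ):ℝ) = (n:ℝ)+1 := by push_cast; ring
      rw [hcast]
      linarith

lemma inv_sq_Icc_le' (n₁ : ℕ) (h1 : 1 ≤ n₁) (n : ℕ) :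
    ∑ m ∈ Icc n₁ n, (1 / (m:ℝ)^2) ≤ 2 / (n₁:ℝ) := by
  have := inv_sq_Icc_le n₁ h1 n
  have h2 : (0:ℝ) ≤ 2 / ((max n₁ (n+1):ℕ):ℝ) := by positivity
  linarith
end aux

section master
variable {d : ℕ}

lemma zbox_mono {n m : ℕ} (h : n ≤ m) : zbox d n ⊆ zbox d m := by
  intro y hy
  rw [mem_zbox] at *
  omega

lemma zbox_sum_eq (f : ℕ → ℝ) (n : ℕ) :
    ∑ y ∈ zbox d n, f (mnorm y) =
      f 0 + ∑ m ∈ Icc 1 n, (((2*m+1)^d - (2*m-1)^d : ℕ) : ℝ) * f m := by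
  induction n with
  | zero =>
    have h1 : ∀ y ∈ zbox d 0, f (mnorm y) = f 0 := by
      intro y hy
      rw [mem_zbox] at hy
      have : mnorm y = 0 := by omega
      rw [this]
    rw [Finset.sum_congr rfl h1, Finset.sum_const, card_zbox]
    simp
  | succ n ih =>
    have hsub : zbox d n ⊆ zbox d (n+1) := zbox_mono (by omega)
    rw [← Finset.sum_sdiff hsub, ih]
    have h2 : ∀ y ∈ zbox d (n+1) \ zbox d n, f (mnorm y) = f (n+1) := by
      intro y hy
      rw [Finset.mem_sdiff, mem_zbox, mem_zbox] at hy
      have : mnorm y = n+1 := by omega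
      rw [this]
    rw [Finset.sum_congr rfl h2, Finset.sum_const, Finset.card_sdiff_of_subset hsub, card_zbox, card_zbox,
      Finset.sum_Icc_succ_top (by omega : 1 ≤ n+1)]
    have h3 : 2*(n+1)+1 = 2*n+3 := by omega
    have h4 : 2*(n+1)-1 = 2*n+1 := by omega
    rw [h3, h4, nsmul_eq_mul]
    push_cast
    ring
  
lemma shellcard_le (hd : 1 ≤ d) {m : ℕ} (hm : 1 ≤ m) :
    (((2*m+1)^d - (2*m-1)^d : ℕ) : ℝ) ≤ (2*d*3^(d-1) : ℝ) * m^(d-1) := by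
  have hle : (2*m-1)^d ≤ (2*m+1)^d := Nat.pow_le_pow_left (by omega) d
  rw [Nat.cast_sub hle]
  have h1 : ((2*m-1:ℕ):ℝ) = 2*(m:ℝ)-1 := by
    have : (2*m-1:ℕ) = 2*m-1 := rfl
    push_cast [Nat.cast_sub (by omega : 1 ≤ 2*m)]
    ring
  have h2 : ((2*m+1:ℕ):ℝ) = 2*(m:ℝ)+1 := by push_cast; ring
  push_cast [h1]
  have hm1 : (1:ℝ) ≤ (m:ℝ) := by exact_mod_cast hm
  have h3 : (2*(m:ℝ)+1)^d - (2*(m:ℝ)-1)^d ≤ d * (2*(m:ℝ)+1)^(d-1) * ((2*(m:ℝ)+1) - (2*(m:ℝ)-1)) :=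
    pow_sub_pow_le' (by linarith) (by linarith) d
  have h4 : (2*(m:ℝ)+1)^(d-1) ≤ (3*(m:ℝ))^(d-1) := by
    apply pow_le_pow_left₀ (by linarith) (by linarith)
  calc (2*(m:ℝ)+1)^d - (2*(m:ℝ)-1)^d ≤ d * (2*(m:ℝ)+1)^(d-1) * 2 := by linarith
    _ ≤ d * (3*(m:ℝ))^(d-1) * 2 := by
        have hd0 : (0:ℝ) ≤ d := Nat.cast_nonneg d
        nlinarith [pow_nonneg (by linarith : (0:ℝ) ≤ 2*(m:ℝ)+1) (d-1)]
    _ = 2*d*3^(d-1) * (m:ℝ)^(d-1) := by rw [mul_pow]; ring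

lemma master (hd : 1 ≤ d) (f : ℕ → ℝ) (hf : ∀ m, 0 ≤ f m) (T : ℝ)
    (hT : ∀ n, ∑ m ∈ Icc 1 n, (2*d*3^(d-1) : ℝ) * m^(d-1) * f m ≤ T)
    (s : Finset (Fin d → ℤ)) :
    ∑ y ∈ s, f (mnorm y) ≤ f 0 + T := by
  classical
  set n := s.sup mnorm with hn
  have hsub : s ⊆ zbox d n := by
    intro y hy
    rw [mem_zbox]
    exact Finset.le_sup (f := mnorm) hy
  calc ∑ y ∈ s, f (mnorm y) ≤ ∑ y ∈ zbox d n, f (mnorm y) :=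
        Finset.sum_le_sum_of_subset_of_nonneg hsub (fun y _ _ => hf _)
    _ = f 0 + ∑ m ∈ Icc 1 n, (((2*m+1)^d - (2*m-1)^d : ℕ) : ℝ) * f m := zbox_sum_eq f n
    _ ≤ f 0 + ∑ m ∈ Icc 1 n, (2*d*3^(d-1) : ℝ) * m^(d-1) * f m := by
        apply add_le_add_right
        apply Finset.sum_le_sum
        intro m hm
        rw [Finset.mem_Icc] at hm
        exact mul_le_mul_of_nonneg_right (shellcard_le hd hm.1) (hf m)
    _ ≤ f 0 + T := add_le_add_right (hT n) _
end master

lemma sumA {d : ℕ} (hd : 5 ≤ d) (x : Fin d → ℤ) (t : Finset (Fin d → ℤ))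
    (ht : ∀ y ∈ t, 2 * znorm y ≤ znorm x) :
    ∑ y ∈ t, (1/(1 + znorm y ^(d-2))) * (1/(1 + znorm (x-y) ^ (d-2)))
      ≤ ((2:ℝ)+(2*d*3^(d-1))/2) * 2^(d-2) / (1 + znorm x ^ (d-4)) := by
  classical
  set c₀ : ℝ := 2*d*3^(d-1) with hc₀
  have hc₀0 : 0 ≤ c₀ := by positivity
  set K := znorm x with hKdef
  have hK0 : 0 ≤ K := znorm_nonneg x
  set n₀ : ℕ := ⌊K/2⌋₊ with hn₀
  set fA : ℕ → ℝ := fun m => if m ≤ n₀ then 1/(1+(m:ℝ)^(d-2)) else 0 with hfA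
  have hfA0 : ∀ m, 0 ≤ fA m := by
    intro m; rw [hfA]; dsimp only
    split
    · positivity
    · exact le_rfl
  have hmem : ∀ y ∈ t, (1/(1 + znorm y ^(d-2))) * (1/(1 + znorm (x-y) ^ (d-2)))
      ≤ fA (mnorm y) * (1/(1+(K/2)^(d-2))) := by
    intro y hy
    have hy2 : 2 * znorm y ≤ K := ht y hy
    have hzy0 : 0 ≤ znorm y := znorm_nonneg y
    have hmy : (mnorm y : ℝ) ≤ K/2 := (mnorm_le_znorm (by omega) y).trans (by linarith)
    have hmyn : mnorm y ≤ n₀ := Nat.le_floor hmy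
    have h1 : (1:ℝ)/(1 + znorm y ^(d-2)) ≤ fA (mnorm y) := by
      rw [hfA]; dsimp only
      rw [if_pos hmyn]
      apply one_div_le_one_div_of_le (by positivity)
      have := pow_le_pow_left₀ (Nat.cast_nonneg (mnorm y)) (mnorm_le_znorm (by omega) y) (d-2)
      linarith
    have h2 : (1:ℝ)/(1 + znorm (x-y) ^(d-2)) ≤ 1/(1+(K/2)^(d-2)) := by
      apply one_div_le_one_div_of_le (by positivity)
      have htr : K ≤ znorm y + znorm (x - y) := znorm_triangle x y
      have hK2 : K/2 ≤ znorm (x-y) := by linarith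
      have := pow_le_pow_left₀ (by linarith : (0:ℝ) ≤ K/2) hK2 (d-2)
      linarith
    have hzz := pow_nonneg (znorm_nonneg (x-y)) (d-2)
    exact mul_le_mul h1 h2 (one_div_nonneg.2 (by linarith)) (hfA0 _)
  have hsum1 : ∑ y ∈ t, (1/(1 + znorm y ^(d-2))) * (1/(1 + znorm (x-y) ^ (d-2)))
      ≤ (∑ y ∈ t, fA (mnorm y)) * (1/(1+(K/2)^(d-2))) := by
    rw [Finset.sum_mul]
    exact Finset.sum_le_sum hmem
  -- master bound
  have hT : ∀ n, ∑ m ∈ Icc 1 n, (2*d*3^(d-1) : ℝ) * m^(d-1) * fA m ≤ c₀ * n₀^2 := by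
    intro n
    have hpt : ∀ m ∈ Icc 1 n, (2*d*3^(d-1) : ℝ) * m^(d-1) * fA m
        ≤ if m ≤ n₀ then c₀ * m else 0 := by
      intro m hm
      rw [Finset.mem_Icc] at hm
      rw [hfA]; dsimp only
      by_cases hc : m ≤ n₀
      · rw [if_pos hc, if_pos hc]
        have hm1 : (1:ℝ) ≤ (m:ℝ) := by exact_mod_cast hm.1
        rw [mul_one_div]
        rw [div_le_iff₀ (by positivity)]
        have key : (m:ℝ)^(d-1) ≤ (m:ℝ) * (1 + (m:ℝ)^(d-2)) := by
          have : (m:ℝ)^(d-1) = (m:ℝ) * (m:ℝ)^(d-2) := by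
            rw [← pow_succ']
            congr 1
            omega
          nlinarith
        calc c₀ * (m:ℝ)^(d-1) ≤ c₀ * ((m:ℝ) * (1 + (m:ℝ)^(d-2))) :=
              mul_le_mul_of_nonneg_left key hc₀0
          _ = c₀ * (m:ℝ) * (1 + (m:ℝ)^(d-2)) := by ring
      · rw [if_neg hc, if_neg hc, mul_zero]
    calc ∑ m ∈ Icc 1 n, (2*d*3^(d-1) : ℝ) * m^(d-1) * fA m
        ≤ ∑ m ∈ Icc 1 n, (if m ≤ n₀ then c₀ * (m:ℝ) else 0) := Finset.sum_le_sum hpt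
      _ = ∑ m ∈ (Icc 1 n).filter (fun m => m ≤ n₀), c₀ * (m:ℝ) := (Finset.sum_filter _ _).symm
      _ ≤ ∑ m ∈ Icc 1 n₀, c₀ * (m:ℝ) := by
          apply Finset.sum_le_sum_of_subset_of_nonneg
          · intro m hm
            simp only [Finset.mem_filter, Finset.mem_Icc] at hm ⊢
            omega
          · intro m hm _
            have : (0:ℝ) ≤ (m:ℝ) := Nat.cast_nonneg m
            positivity
      _ ≤ (Icc 1 n₀).card • (c₀ * (n₀:ℝ)) := by
          apply Finset.sum_le_card_nsmul
          intro m hm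
          rw [Finset.mem_Icc] at hm
          have : (m:ℝ) ≤ (n₀:ℝ) := by exact_mod_cast hm.2
          nlinarith
      _ ≤ c₀ * n₀^2 := by
          rw [Nat.card_Icc, nsmul_eq_mul]
          have h1 : ((n₀ + 1 - 1 : ℕ):ℝ) = (n₀:ℝ) := by norm_num
          rw [h1]
          nlinarith [Nat.cast_nonneg (α := ℝ) n₀]
  have hmaster := master (by omega : 1 ≤ d) fA hfA0 (c₀ * n₀^2) hT t
  have hfA0v : fA 0 = 1 := by
    rw [hfA]; dsimp only
    rw [if_pos (Nat.zero_le _)]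
    rw [Nat.cast_zero, zero_pow (by omega : d - 2 ≠ 0)]
    norm_num
  rw [hfA0v] at hmaster
  -- combine
  have hcomb : ∑ y ∈ t, (1/(1 + znorm y ^(d-2))) * (1/(1 + znorm (x-y) ^ (d-2)))
      ≤ (1 + c₀ * n₀^2) / (1+(K/2)^(d-2)) := by
    rw [div_eq_mul_one_div]
    calc ∑ y ∈ t, (1/(1 + znorm y ^(d-2))) * (1/(1 + znorm (x-y) ^ (d-2)))
        ≤ (∑ y ∈ t, fA (mnorm y)) * (1/(1+(K/2)^(d-2))) := hsum1
      _ ≤ (1 + c₀ * n₀^2) * (1/(1+(K/2)^(d-2))) := by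
          apply mul_le_mul_of_nonneg_right hmaster
          positivity
  refine hcomb.trans ?_
  -- final numeric inequality
  rw [div_le_div_iff₀ (by positivity) (by positivity)]
  have hfl : (n₀:ℝ) ≤ K/2 := Nat.floor_le (by linarith)
  have hn₀sq : (n₀:ℝ)^2 ≤ K^2/4 := by nlinarith [Nat.cast_nonneg (α := ℝ) n₀]
  have h2e : (1:ℝ) ≤ 2^(d-2) := one_le_pow₀ (by norm_num)
  have hKe2 : (K/2)^(d-2) * 2^(d-2) = K^(d-2) := by
    rw [div_pow, div_mul_cancel₀]
    positivity
  rcases le_total K 1 with hK1 | hK1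
  · have hn00 : n₀ = 0 := by
      rw [hn₀]
      apply Nat.floor_eq_zero.2
      linarith
    rw [hn00]
    have hq1 : K^(d-4) ≤ 1 := pow_le_one₀ hK0 hK1
    have hp0 : (0:ℝ) ≤ (K/2)^(d-2) := by positivity
    push_cast
    nlinarith [mul_le_mul_of_nonneg_left h2e (show (0:ℝ) ≤ 2 + c₀/2 by linarith),
      mul_nonneg (mul_nonneg (show (0:ℝ) ≤ 2+c₀/2 by linarith)
        (show (0:ℝ) ≤ (2:ℝ)^(d-2) by positivity)) hp0]
  · have h1K : (1:ℝ) ≤ K^(d-2) := one_le_pow₀ hK1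
    have hq : K^(d-4) ≤ K^(d-2) := pow_le_pow_right₀ hK1 (by omega)
    have h2 : K^2 ≤ K^(d-2) := pow_le_pow_right₀ hK1 (by omega)
    have hmul : K^2 * K^(d-4) = K^(d-2) := by
      rw [← pow_add]
      congr 1
      omega
    have hq0 : (0:ℝ) ≤ K^(d-4) := by positivity
    have hsq : (n₀:ℝ)^2 * K^(d-4) ≤ K^(d-2)/4 := by
      nlinarith [mul_le_mul_of_nonneg_right hn₀sq hq0]
    have hsq2 : (n₀:ℝ)^2 ≤ K^(d-2)/4 := by linarith
    have hgoal : (1 + c₀ * (n₀:ℝ)^2) * (1 + K^(d-4))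
        = 1 + K^(d-4) + c₀*(n₀:ℝ)^2 + c₀*((n₀:ℝ)^2*K^(d-4)) := by ring
    have hRHS : (2+c₀/2) * 2^(d-2) * (1 + (K/2)^(d-2))
        = (2+c₀/2)*2^(d-2) + (2+c₀/2)*((K/2)^(d-2)*2^(d-2)) := by ring
    rw [hgoal, hRHS, hKe2]
    have hB1 := mul_le_mul_of_nonneg_left hsq2 hc₀0
    have hB2 := mul_le_mul_of_nonneg_left hsq hc₀0
    have hN : (0:ℝ) ≤ (2+c₀/2)*2^(d-2) := by positivity
    linarith

lemma sumB {d : ℕ} (hd : 5 ≤ d) (K : ℝ) (hK0 : 0 ≤ K) (t : Finset (Fin d → ℤ))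
    (ht : ∀ z ∈ t, K < 2 * znorm z) :
    ∑ z ∈ t, (1/(1 + znorm z ^(d-2)))^2
      ≤ (4*(2*(d:ℝ)*3^(d-1))*(2*d)^(d-4)) / (1 + K ^ (d-4)) := by
  classical
  set c₀ : ℝ := 2*d*3^(d-1) with hc₀
  have hc₀0 : 0 ≤ c₀ := by positivity
  set n₁ : ℕ := max ⌈K/(2*d)⌉₊ 1 with hn₁
  have hn₁1 : 1 ≤ n₁ := le_max_right _ _
  have hd0 : (0:ℝ) < d := by exact_mod_cast (by omega : 0 < d)
  have hmem : ∀ z ∈ t, n₁ ≤ mnorm z := by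
    intro z hz
    have h1 : K < 2 * znorm z := ht z hz
    have h2 : znorm z ≤ d * mnorm z := znorm_le_mnorm z
    have h3 : K / (2*d) < mnorm z := by
      rw [div_lt_iff₀ (by positivity)]
      nlinarith
    have h4 : ⌈K/(2*d)⌉₊ ≤ mnorm z := Nat.ceil_le.2 h3.le
    have h5 : 1 ≤ mnorm z := by
      rcases Nat.eq_zero_or_pos (mnorm z) with h | h
      · exfalso
        rw [h] at h2
        push_cast at h2
        nlinarith [znorm_nonneg z]
      · exact h
    omega
  set fB : ℕ → ℝ := fun m => if n₁ ≤ m then (1/(1+(m:ℝ)^(d-2)))^2 else 0 with hfB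
  have hfB0 : ∀ m, 0 ≤ fB m := by
    intro m; rw [hfB]; dsimp only
    split
    · positivity
    · exact le_rfl
  have hpt : ∀ z ∈ t, (1/(1 + znorm z ^(d-2)))^2 ≤ fB (mnorm z) := by
    intro z hz
    rw [hfB]; dsimp only
    rw [if_pos (hmem z hz)]
    have hmz := mnorm_le_znorm (by omega : 1 ≤ d) z
    have h1 : ((mnorm z:ℝ))^(d-2) ≤ znorm z ^ (d-2) :=
      pow_le_pow_left₀ (Nat.cast_nonneg _) hmz _
    have h2 : (1:ℝ)/(1 + znorm z ^(d-2)) ≤ 1/(1+(mnorm z:ℝ)^(d-2)) :=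
      one_div_le_one_div_of_le (by positivity) (by linarith)
    have h3 : (0:ℝ) ≤ 1/(1 + znorm z ^(d-2)) := by
      have := pow_nonneg (znorm_nonneg z) (d-2)
      positivity
    exact pow_le_pow_left₀ h3 h2 2
  have hT : ∀ n, ∑ m ∈ Icc 1 n, (2*d*3^(d-1) : ℝ) * m^(d-1) * fB m
      ≤ (2*c₀) / (n₁:ℝ)^(d-4) := by
    intro n
    have hn₁0 : (0:ℝ) < (n₁:ℝ) := by exact_mod_cast hn₁1
    have hstep : ∀ m ∈ Icc 1 n, (2*d*3^(d-1) : ℝ) * m^(d-1) * fB m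
        ≤ if n₁ ≤ m then (c₀/(n₁:ℝ)^(d-5)) * (1/(m:ℝ)^2) else 0 := by
      intro m hm
      rw [Finset.mem_Icc] at hm
      have hm1 : (1:ℝ) ≤ (m:ℝ) := by exact_mod_cast hm.1
      rw [hfB]; dsimp only
      by_cases hc : n₁ ≤ m
      · rw [if_pos hc, if_pos hc]
        have hnm : (n₁:ℝ) ≤ (m:ℝ) := by exact_mod_cast hc
        have key : (m:ℝ)^(d-1) * ((n₁:ℝ)^(d-5) * (m:ℝ)^2) ≤ (1+(m:ℝ)^(d-2))^2 := by
          have e1 : (n₁:ℝ)^(d-5) ≤ (m:ℝ)^(d-5) := pow_le_pow_left₀ (by positivity) hnm _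
          have e2 : (m:ℝ)^(d-1) * ((m:ℝ)^(d-5) * (m:ℝ)^2) = ((m:ℝ)^(d-2))^2 := by
            rw [← pow_add, ← pow_add, ← pow_mul]
            congr 1
            omega
          have e3 : ((m:ℝ)^(d-2))^2 ≤ (1+(m:ℝ)^(d-2))^2 := by
            apply pow_le_pow_left₀ (by positivity)
            linarith
          have e4 : (m:ℝ)^(d-1) * ((n₁:ℝ)^(d-5) * (m:ℝ)^2)
              ≤ (m:ℝ)^(d-1) * ((m:ℝ)^(d-5) * (m:ℝ)^2) := by
            have e5 := mul_le_mul_of_nonneg_right e1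
              (pow_nonneg (show (0:ℝ) ≤ (m:ℝ) by linarith) 2)
            exact mul_le_mul_of_nonneg_left e5
              (pow_nonneg (show (0:ℝ) ≤ (m:ℝ) by linarith) (d-1))
          calc (m:ℝ)^(d-1) * ((n₁:ℝ)^(d-5) * (m:ℝ)^2)
              ≤ (m:ℝ)^(d-1) * ((m:ℝ)^(d-5) * (m:ℝ)^2) := e4
            _ = ((m:ℝ)^(d-2))^2 := e2
            _ ≤ _ := e3
        have hX : (0:ℝ) < (1+(m:ℝ)^(d-2))^2 := by positivity
        have hab : (0:ℝ) < (n₁:ℝ)^(d-5) * (m:ℝ)^2 := by positivity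
        have lhs_eq : (2*(d:ℝ)*3^(d-1)) * m^(d-1) * ((1/(1+(m:ℝ)^(d-2)))^2)
            = (c₀ * (m:ℝ)^(d-1)) / (1+(m:ℝ)^(d-2))^2 := by
          rw [hc₀]
          field_simp
        have rhs_eq : (c₀/(n₁:ℝ)^(d-5)) * (1/(m:ℝ)^2) = c₀ / ((n₁:ℝ)^(d-5) * (m:ℝ)^2) := by
          field_simp
        rw [lhs_eq, rhs_eq, div_le_div_iff₀ hX hab]
        calc c₀ * (m:ℝ)^(d-1) * ((n₁:ℝ)^(d-5) * (m:ℝ)^2)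
            = c₀ * ((m:ℝ)^(d-1) * ((n₁:ℝ)^(d-5) * (m:ℝ)^2)) := by ring
          _ ≤ c₀ * (1+(m:ℝ)^(d-2))^2 := mul_le_mul_of_nonneg_left key hc₀0
      · rw [if_neg hc, if_neg hc, mul_zero]
    calc ∑ m ∈ Icc 1 n, (2*d*3^(d-1) : ℝ) * m^(d-1) * fB m
        ≤ ∑ m ∈ Icc 1 n, (if n₁ ≤ m then (c₀/(n₁:ℝ)^(d-5)) * (1/(m:ℝ)^2) else 0) :=
          Finset.sum_le_sum hstep
      _ = ∑ m ∈ (Icc 1 n).filter (fun m => n₁ ≤ m), (c₀/(n₁:ℝ)^(d-5)) * (1/(m:ℝ)^2) :=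
          (Finset.sum_filter _ _).symm
      _ ≤ ∑ m ∈ Icc n₁ n, (c₀/(n₁:ℝ)^(d-5)) * (1/(m:ℝ)^2) := by
          apply Finset.sum_le_sum_of_subset_of_nonneg
          · intro m hm
            simp only [Finset.mem_filter, Finset.mem_Icc] at hm ⊢
            omega
          · intro m hm _
            positivity
      _ = (c₀/(n₁:ℝ)^(d-5)) * ∑ m ∈ Icc n₁ n, (1/(m:ℝ)^2) := by rw [Finset.mul_sum]
      _ ≤ (c₀/(n₁:ℝ)^(d-5)) * (2/(n₁:ℝ)) := by
          apply mul_le_mul_of_nonneg_left (inv_sq_Icc_le' n₁ hn₁1 n)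
          positivity
      _ = (2*c₀) / (n₁:ℝ)^(d-4) := by
          rw [div_mul_div_comm]
          congr 1
          · ring
          · rw [← pow_succ]
            congr 1
            omega
  have hmaster := master (by omega : 1 ≤ d) fB hfB0 _ hT t
  have hfB00 : fB 0 = 0 := by
    rw [hfB]; dsimp only
    rw [if_neg (by omega)]
  rw [hfB00, zero_add] at hmaster
  have htot : ∑ z ∈ t, (1/(1 + znorm z ^(d-2)))^2 ≤ (2*c₀) / (n₁:ℝ)^(d-4) :=
    le_trans (Finset.sum_le_sum hpt) hmaster
  refine htot.trans ?_
  -- final: 2c₀/n₁^{d-4} ≤ 4c₀(2d)^{d-4}/(1+K^{d-4})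
  have hn₁0 : (0:ℝ) < (n₁:ℝ) := by exact_mod_cast hn₁1
  have hd5 : (5:ℝ) ≤ (d:ℝ) := by exact_mod_cast hd
  rw [div_le_div_iff₀ (by positivity) (by positivity)]
  have h1 : (1:ℝ) ≤ (n₁:ℝ)^(d-4) := one_le_pow₀ (by exact_mod_cast hn₁1)
  have h2 : K ≤ 2*d*(n₁:ℝ) := by
    have : K/(2*d) ≤ (⌈K/(2*d)⌉₊:ℝ) := Nat.le_ceil _
    have h3 : ((⌈K/(2*(d:ℝ))⌉₊ : ℕ):ℝ) ≤ (n₁:ℝ) := Nat.cast_le.2 (le_max_left _ _)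
    rw [div_le_iff₀ (by positivity)] at this
    nlinarith
  have h4 : K^(d-4) ≤ (2*(d:ℝ))^(d-4) * (n₁:ℝ)^(d-4) := by
    rw [← mul_pow]
    exact pow_le_pow_left₀ hK0 h2 _
  have h5 : (1:ℝ) ≤ (2*(d:ℝ))^(d-4) := one_le_pow₀ (by linarith)
  have hX1 : (1:ℝ) ≤ (2*(d:ℝ))^(d-4) * (n₁:ℝ)^(d-4) := by nlinarith
  have f1 : c₀ * 1 ≤ c₀ * ((2*(d:ℝ))^(d-4)*(n₁:ℝ)^(d-4)) := mul_le_mul_of_nonneg_left hX1 hc₀0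
  have f2 : c₀ * K^(d-4) ≤ c₀ * ((2*(d:ℝ))^(d-4)*(n₁:ℝ)^(d-4)) := mul_le_mul_of_nonneg_left h4 hc₀0
  nlinarith [f1, f2]

lemma key_upper {d : ℕ} (hd : 5 ≤ d) (C : ℝ) (hC : 0 < C)
    (g : (Fin d → ℤ) → ℝ) (hg0 : ∀ x, 0 ≤ g x)
    (hgU : ∀ z, g z ≤ C / (1 + znorm z ^ (d-2))) (x : Fin d → ℤ) (s : Finset (Fin d → ℤ)) :
    ∑ y ∈ s, g y * g (x - y) ≤
      C^2 * (2*(((2:ℝ)+(2*d*3^(d-1))/2) * 2^(d-2)) + 2*(4*(2*(d:ℝ)*3^(d-1))*(2*d)^(d-4)))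
        / (1 + znorm x ^ (d-4)) := by
  classical
  set A : ℝ := ((2:ℝ)+(2*d*3^(d-1))/2) * 2^(d-2) with hA
  set B : ℝ := 4*(2*(d:ℝ)*3^(d-1))*(2*d)^(d-4) with hB
  set K := znorm x with hK
  have hK0 : 0 ≤ K := znorm_nonneg x
  set u : (Fin d → ℤ) → ℝ := fun z => 1/(1 + znorm z ^(d-2)) with hu
  have hu0 : ∀ z, 0 ≤ u z := by
    intro z
    have := pow_nonneg (znorm_nonneg z) (d-2)
    rw [hu]; dsimp only
    positivity
  have hgu : ∀ z, g z ≤ C * u z := by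
    intro z
    rw [hu]; dsimp only
    rw [mul_one_div]
    exact hgU z
  have hstep : ∀ y, g y * g (x - y) ≤ C^2 * (u y * u (x-y)) := by
    intro y
    have h1 := hgu y
    have h2 := hgu (x-y)
    have := mul_le_mul h1 h2 (hg0 (x-y)) (mul_nonneg hC.le (hu0 y))
    calc g y * g (x-y) ≤ (C * u y) * (C * u (x-y)) := this
      _ = C^2 * (u y * u (x-y)) := by ring
  have hsum0 : ∑ y ∈ s, g y * g (x - y) ≤ C^2 * ∑ y ∈ s, u y * u (x-y) := by
    rw [Finset.mul_sum]
    exact Finset.sum_le_sum fun y _ => hstep y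
  -- split
  set p1 : (Fin d → ℤ) → Prop := fun y => 2 * znorm y ≤ K with hp1
  set p2 : (Fin d → ℤ) → Prop := fun y => 2 * znorm (x-y) ≤ K with hp2
  set p3 : (Fin d → ℤ) → Prop := fun y => znorm (x-y) ≤ znorm y with hp3
  set s1 := s.filter p1 with hs1
  set sr := s.filter (fun y => ¬ p1 y) with hsr
  set s2 := sr.filter p2 with hs2
  set s3 := sr.filter (fun y => ¬ p2 y) with hs3
  set s3a := s3.filter p3 with hs3a
  set s3b := s3.filter (fun y => ¬ p3 y) with hs3b
  have hsplit : ∑ y ∈ s, u y * u (x-y)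
      = ∑ y ∈ s1, u y * u (x-y) + (∑ y ∈ s2, u y * u (x-y)
        + (∑ y ∈ s3a, u y * u (x-y) + ∑ y ∈ s3b, u y * u (x-y))) := by
    rw [hs3a, hs3b, Finset.sum_filter_add_sum_filter_not s3 p3]
    rw [hs2, hs3, Finset.sum_filter_add_sum_filter_not sr p2]
    rw [hs1, hsr, Finset.sum_filter_add_sum_filter_not s p1]
  -- S1
  have hS1 : ∑ y ∈ s1, u y * u (x-y) ≤ A / (1 + K ^ (d-4)) := by
    apply sumA hd x s1
    intro y hy
    rw [hs1, Finset.mem_filter] at hy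
    exact hy.2
  -- S2 via image
  have hinj : ∀ (t : Finset (Fin d → ℤ)), ∀ y1 ∈ t, ∀ y2 ∈ t, x - y1 = x - y2 → y1 = y2 :=
    fun t y1 _ y2 _ h => sub_right_injective h
  have hS2 : ∑ y ∈ s2, u y * u (x-y) ≤ A / (1 + K ^ (d-4)) := by
    have him : ∑ z ∈ s2.image (fun y => x - y), u z * u (x-z)
        = ∑ y ∈ s2, u y * u (x-y) := by
      rw [Finset.sum_image (hinj s2)]
      apply Finset.sum_congr rfl
      intro y hy
      rw [sub_sub_cancel]
      ring
    rw [← him]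
    apply sumA hd x
    intro z hz
    rw [Finset.mem_image] at hz
    obtain ⟨y, hy, rfl⟩ := hz
    rw [hs2, Finset.mem_filter] at hy
    exact hy.2
  -- S3a
  have hS3a : ∑ y ∈ s3a, u y * u (x-y) ≤ B / (1 + K ^ (d-4)) := by
    have hpt : ∀ y ∈ s3a, u y * u (x-y) ≤ u (x-y)^2 := by
      intro y hy
      rw [hs3a, Finset.mem_filter] at hy
      have h3 : znorm (x-y) ≤ znorm y := hy.2
      have huy : u y ≤ u (x-y) := by
        rw [hu]; dsimp only
        apply one_div_le_one_div_of_le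
        · have := pow_nonneg (znorm_nonneg (x-y)) (d-2)
          positivity
        · have := pow_le_pow_left₀ (znorm_nonneg (x-y)) h3 (d-2)
          linarith
      calc u y * u (x-y) ≤ u (x-y) * u (x-y) :=
            mul_le_mul_of_nonneg_right huy (hu0 _)
        _ = u (x-y)^2 := (sq _).symm
    have him : ∑ y ∈ s3a, u (x-y)^2 = ∑ z ∈ s3a.image (fun y => x - y), u z ^2 := by
      rw [Finset.sum_image (hinj s3a)]
    calc ∑ y ∈ s3a, u y * u (x-y) ≤ ∑ y ∈ s3a, u (x-y)^2 := Finset.sum_le_sum hpt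
      _ = ∑ z ∈ s3a.image (fun y => x - y), u z ^2 := him
      _ ≤ B / (1 + K ^ (d-4)) := by
          apply sumB hd K hK0
          intro z hz
          rw [Finset.mem_image] at hz
          obtain ⟨y, hy, rfl⟩ := hz
          rw [hs3a, Finset.mem_filter, hs3, Finset.mem_filter] at hy
          have := hy.1.2
          rw [hp2] at this
          dsimp only at this
          linarith [not_le.1 this]
  -- S3b
  have hS3b : ∑ y ∈ s3b, u y * u (x-y) ≤ B / (1 + K ^ (d-4)) := by
    have hpt : ∀ y ∈ s3b, u y * u (x-y) ≤ u y^2 := by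
      intro y hy
      rw [hs3b, Finset.mem_filter] at hy
      have h3 : znorm y ≤ znorm (x-y) := (not_le.1 hy.2).le
      have huy : u (x-y) ≤ u y := by
        rw [hu]; dsimp only
        apply one_div_le_one_div_of_le
        · have := pow_nonneg (znorm_nonneg y) (d-2)
          positivity
        · have := pow_le_pow_left₀ (znorm_nonneg y) h3 (d-2)
          linarith
      calc u y * u (x-y) ≤ u y * u y := mul_le_mul_of_nonneg_left huy (hu0 _)
        _ = u y^2 := (sq _).symm
    calc ∑ y ∈ s3b, u y * u (x-y) ≤ ∑ y ∈ s3b, u y^2 := Finset.sum_le_sum hpt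
      _ ≤ B / (1 + K ^ (d-4)) := by
          apply sumB hd K hK0
          intro z hz
          rw [hs3b, Finset.mem_filter, hs3, Finset.mem_filter, hsr, Finset.mem_filter] at hz
          have h1 := hz.1.1.2
          rw [hp1] at h1
          dsimp only at h1
          push_neg at h1
          exact h1
  -- combine
  have hsum2 : ∑ y ∈ s, u y * u (x-y) ≤ (2*A + 2*B) / (1 + K ^ (d-4)) := by
    rw [hsplit]
    have : (2*A + 2*B) / (1 + K ^ (d-4))
        = A/(1+K^(d-4)) + (A/(1+K^(d-4)) + (B/(1+K^(d-4)) + B/(1+K^(d-4)))) := by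
      ring
    rw [this]
    gcongr
  calc ∑ y ∈ s, g y * g (x - y) ≤ C^2 * ∑ y ∈ s, u y * u (x-y) := hsum0
    _ ≤ C^2 * ((2*A + 2*B) / (1 + K ^ (d-4))) := by
        apply mul_le_mul_of_nonneg_left hsum2 (by positivity)
    _ = C^2 * (2*A + 2*B) / (1 + K ^ (d-4)) := by ring


set_option maxHeartbeats 3200000 in
/-- If `g` decays like `(1+‖x‖^{d-2})^{-1}` (the Green's function profile),
then `G = g * g` decays like `(1+‖x‖^{d-4})^{-1}`, with a matching lower
bound when `g` is also bounded below by the same profile. -/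
theorem stmt15 (d : ℕ) (hd : 5 ≤ d) (C : ℝ) (hC : 0 < C)
    (g : (Fin d → ℤ) → ℝ) (hg0 : ∀ x, 0 ≤ g x)
    (hgU : ∀ x : Fin d → ℤ, g x ≤ C / (1 + znorm x ^ ((d : ℝ) - 2))) :
    (∃ C' : ℝ, 0 < C' ∧ ∀ x : Fin d → ℤ,
        (∑' y : Fin d → ℤ, g y * g (x - y)) ≤ C' / (1 + znorm x ^ ((d : ℝ) - 4))) ∧
    (∀ c : ℝ, 0 < c → (∀ x : Fin d → ℤ, c / (1 + znorm x ^ ((d : ℝ) - 2)) ≤ g x) →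
      ∃ c' : ℝ, 0 < c' ∧ ∀ x : Fin d → ℤ,
        c' / (1 + znorm x ^ ((d : ℝ) - 4)) ≤ ∑' y : Fin d → ℤ, g y * g (x - y)) := by
  have he2 : ∀ z : Fin d → ℤ, znorm z ^ ((d:ℝ)-2) = znorm z ^ (d-2 : ℕ) := by
    intro z
    rw [show ((d:ℝ)-2) = ((d-2:ℕ):ℝ) by
      rw [Nat.cast_sub (by omega : 2 ≤ d)]; norm_num]
    exact Real.rpow_natCast _ _
  have he4 : ∀ z : Fin d → ℤ, znorm z ^ ((d:ℝ)-4) = znorm z ^ (d-4 : ℕ) := by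
    intro z
    rw [show ((d:ℝ)-4) = ((d-4:ℕ):ℝ) by
      rw [Nat.cast_sub (by omega : 4 ≤ d)]; norm_num]
    exact Real.rpow_natCast _ _
  have hgU' : ∀ z, g z ≤ C / (1 + znorm z ^ (d-2:ℕ)) := fun z => by
    rw [← he2]; exact hgU z
  have hd0 : (0:ℝ) < (d:ℝ) := by exact_mod_cast (by omega : 0 < d)
  set C' : ℝ := C^2 * (2*(((2:ℝ)+(2*d*3^(d-1))/2) * 2^(d-2)) + 2*(4*(2*(d:ℝ)*3^(d-1))*(2*d)^(d-4)))
    with hC'def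
  have hC'pos : 0 < C' := by
    rw [hC'def]
    have h1 : (0:ℝ) < 2*(((2:ℝ)+(2*d*3^(d-1))/2) * 2^(d-2)) := by positivity
    have h2 : (0:ℝ) ≤ 2*(4*(2*(d:ℝ)*3^(d-1))*(2*d)^(d-4)) := by positivity
    have := mul_pos (pow_pos hC 2) (by linarith : (0:ℝ) < 2*(((2:ℝ)+(2*d*3^(d-1))/2) * 2^(d-2)) + 2*(4*(2*(d:ℝ)*3^(d-1))*(2*d)^(d-4)))
    linarith
  have hkey := key_upper hd C hC g hg0 hgU'
  have hsummable : ∀ x : Fin d → ℤ, Summable (fun y => g y * g (x - y)) := by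
    intro x
    exact summable_of_sum_le (fun y => mul_nonneg (hg0 _) (hg0 _)) (hkey x)
  constructor
  · refine ⟨C', hC'pos, fun x => ?_⟩
    rw [he4 x]
    exact Summable.tsum_le_of_sum_le (hsummable x) (hkey x)
  · intro c hc hgL
    have hgL' : ∀ z, c / (1 + znorm z ^ (d-2:ℕ)) ≤ g z := fun z => by
      rw [← he2]; exact hgL z
    set W : ℝ := 4*(2*(d:ℝ))^(2*(d-2))*2^(d-4) with hW
    clear_value W
    have hWpos : 0 < W := by
      rw [hW]
      have : (0:ℝ) < 2*(d:ℝ) := by linarith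
      positivity
    refine ⟨c^2/W, div_pos (pow_pos hc 2) hWpos, fun x => ?_⟩
    rw [he4 x]
    set K := znorm x with hK
    clear_value K
    have hK0 : 0 ≤ K := by rw [hK]; exact znorm_nonneg x
    set n : ℕ := ⌊K⌋₊ + 1 with hn
    clear_value n
    set D : ℝ := 1 + (2*(d:ℝ)*(1+K))^(d-2) with hD
    clear_value D
    have hDpos : 0 < D := by
      rw [hD]
      have : (0:ℝ) ≤ 2*(d:ℝ)*(1+K) := by nlinarith
      positivity
    have hnK : K < (n:ℝ) := by
      rw [hn]
      push_cast
      exact Nat.lt_floor_add_one K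
    -- bounds on znorm inside box
    have hd1 : (1:ℝ) ≤ (d:ℝ) := by exact_mod_cast (by omega : 1 ≤ d)
    have hybound0 : ∀ y ∈ zbox d n, znorm y ≤ (d:ℝ)*(1+K) := by
      intro y hy
      rw [mem_zbox] at hy
      have h1 : znorm y ≤ d * mnorm y := znorm_le_mnorm y
      have h2 : (mnorm y : ℝ) ≤ (n:ℝ) := by exact_mod_cast hy
      have h3 : (n:ℝ) ≤ K + 1 := by
        rw [hn]; push_cast
        have := Nat.floor_le hK0
        linarith
      nlinarith
    have hybound : ∀ y ∈ zbox d n, znorm y ≤ 2*(d:ℝ)*(1+K) := by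
      intro y hy
      have := hybound0 y hy
      nlinarith
    have hxybound : ∀ y ∈ zbox d n, znorm (x - y) ≤ 2*(d:ℝ)*(1+K) := by
      intro y hy
      have htr : znorm (x - y) ≤ znorm (-y) + znorm ((x-y) - (-y)) := znorm_triangle _ _
      rw [znorm_neg] at htr
      have heq : (x - y) - (-y) = x := by abel
      rw [heq] at htr
      have h1 := hybound0 y hy
      nlinarith
    have hglow : ∀ z : Fin d → ℤ, znorm z ≤ 2*(d:ℝ)*(1+K) → c / D ≤ g z := by
      intro z hz
      refine le_trans ?_ (hgL' z)
      apply div_le_div_of_nonneg_left hc.le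
      · have := pow_nonneg (znorm_nonneg z) (d-2)
        positivity
      · rw [hD]
        have := pow_le_pow_left₀ (znorm_nonneg z) hz (d-2)
        linarith
    have hterm : ∀ y ∈ zbox d n, (c/D)^2 ≤ g y * g (x - y) := by
      intro y hy
      have h1 := hglow y (hybound y hy)
      have h2 := hglow (x-y) (hxybound y hy)
      have hcD : 0 ≤ c / D := div_nonneg hc.le hDpos.le
      calc (c/D)^2 = (c/D)*(c/D) := sq _
        _ ≤ g y * g (x-y) := mul_le_mul h1 h2 hcD (hg0 y)
    have hboxsum : ((2*n+1:ℕ):ℝ)^d * (c/D)^2 ≤ ∑ y ∈ zbox d n, g y * g (x - y) := by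
      have := Finset.card_nsmul_le_sum (zbox d n) (fun y => g y * g (x-y)) ((c/D)^2) hterm
      rw [card_zbox, nsmul_eq_mul] at this
      calc ((2*n+1:ℕ):ℝ)^d * (c/D)^2 = (((2*n+1)^d : ℕ):ℝ) * (c/D)^2 := by push_cast; ring
        _ ≤ _ := this
    have htsum : ∑ y ∈ zbox d n, g y * g (x - y) ≤ ∑' y, g y * g (x - y) :=
      Summable.sum_le_tsum _ (fun y _ => mul_nonneg (hg0 _) (hg0 _)) (hsummable x)
    -- final numeric chain
    set Ncard : ℝ := ((2*n+1:ℕ):ℝ)^d with hNcard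
    clear_value Ncard
    have hcast : ((2*n+1:ℕ):ℝ) = 2*(n:ℝ)+1 := by push_cast; ring
    have hn0 : (0:ℝ) ≤ (n:ℝ) := Nat.cast_nonneg n
    have hNc1 : (1+K)^d ≤ Ncard := by
      rw [hNcard]
      apply pow_le_pow_left₀ (by linarith)
      rw [hcast]
      linarith
    have hNc0 : 0 < Ncard := by
      rw [hNcard]
      apply pow_pos
      rw [hcast]
      linarith
    have h1Kq : ((1:ℝ)+K)^(d-4) ≤ 2^(d-4)*(1+K^(d-4)) := by
      have h2 : (0:ℝ) ≤ (2:ℝ)^(d-4) := by positivity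
      have h2' : (0:ℝ) ≤ K^(d-4) := pow_nonneg hK0 _
      rcases le_total K 1 with h | h
      · have h1 : ((1:ℝ)+K)^(d-4) ≤ 2^(d-4) := pow_le_pow_left₀ (by linarith) (by linarith) _
        have h3 : (2:ℝ)^(d-4)*1 ≤ 2^(d-4)*(1+K^(d-4)) :=
          mul_le_mul_of_nonneg_left (by linarith) h2
        linarith
      · have h1 : ((1:ℝ)+K)^(d-4) ≤ (2*K)^(d-4) := pow_le_pow_left₀ (by linarith) (by linarith) _
        rw [mul_pow] at h1
        have h3 : (2:ℝ)^(d-4)*K^(d-4) ≤ 2^(d-4)*(1+K^(d-4)) :=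
          mul_le_mul_of_nonneg_left (by linarith) h2
        linarith
    have hDD : D ≤ 2*(2*(d:ℝ))^(d-2)*(1+K)^(d-2) := by
      rw [hD]
      have h0 : (1:ℝ) ≤ 2*(d:ℝ)*(1+K) := by nlinarith [hd1, hK0]
      have h1 : (2*(d:ℝ)*(1+K))^(d-2) = (2*(d:ℝ))^(d-2)*(1+K)^(d-2) := mul_pow _ _ _
      have h2 : (1:ℝ) ≤ (2*(d:ℝ)*(1+K))^(d-2) := one_le_pow₀ h0
      linarith [h1, h2]
    have hsq : D^2 ≤ Ncard * W * (1 + K^(d-4)) := by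
      have h1 : D^2 ≤ (2*(2*(d:ℝ))^(d-2)*(1+K)^(d-2))^2 :=
        pow_le_pow_left₀ hDpos.le hDD 2
      have h2 : (2*(2*(d:ℝ))^(d-2)*(1+K)^(d-2))^2
          = 4*(2*(d:ℝ))^(2*(d-2)) * ((1+K)^d * (1+K)^(d-4)) := by
        rw [show (2*(2*(d:ℝ))^(d-2)*(1+K)^(d-2))^2
            = 4 * ((2*(d:ℝ))^(d-2))^2 * ((1+K)^(d-2))^2 by ring]
        rw [← pow_mul, ← pow_mul]
        rw [show (d-2)*2 = 2*(d-2) from by ring]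
        congr 1
        rw [← pow_add]
        congr 1
        omega
      have h3 : (1+K)^d * (1+K)^(d-4) ≤ Ncard * (2^(d-4)*(1+K^(d-4))) := by
        apply mul_le_mul hNc1 h1Kq (by positivity) hNc0.le
      calc D^2 ≤ 4*(2*(d:ℝ))^(2*(d-2)) * ((1+K)^d * (1+K)^(d-4)) := by rw [← h2]; exact h1
        _ ≤ 4*(2*(d:ℝ))^(2*(d-2)) * (Ncard * (2^(d-4)*(1+K^(d-4)))) := by
            apply mul_le_mul_of_nonneg_left h3
            positivity
        _ = Ncard * W * (1 + K^(d-4)) := by rw [hW]; ring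
    have hfinal : c^2/W/(1+K^(d-4)) ≤ Ncard * (c/D)^2 := by
      rw [div_div]
      rw [show Ncard * (c/D)^2 = Ncard * c^2 / D^2 by rw [div_pow]; ring]
      rw [div_le_div_iff₀ (by positivity) (by positivity)]
      calc c^2 * D^2 ≤ c^2 * (Ncard * W * (1+K^(d-4))) :=
            mul_le_mul_of_nonneg_left hsq (by positivity)
        _ = Ncard * c^2 * (W * (1+K^(d-4))) := by ring
    calc c^2/W/(1+K^(d-4)) ≤ Ncard * (c/D)^2 := hfinal
      _ ≤ ∑ y ∈ zbox d n, g y * g (x - y) := hboxsum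
      _ ≤ _ := htsum
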